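/- Let 𝒰 = {U_1,…,U_N} be a finite open cover of a topological space, and let δ : 𝒞^p(𝒰) → 𝒞^{p+1}(𝒰) be the Čech coboundary operator on real-valued Čech cochains. Suppose ν > 0 satisfies |{j : U_j ∩ U_I ≠ ∅}| ≤ ν for every simplex I of the nerve of 𝒰. Then for every p-cochain b, ‖δ b‖² ≤ (p+2)·ν·‖b‖², where the norm comes from the inner product (c₁, c₂) = Σ_{I ∈ S_p(𝒰)} c₁(I)c₂(I). -/

import Mathlib

open scoped Classical

noncomputable section

/-- The set of `q`-simplices of the nerve of the cover `U`: strictly increasing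
`(q+1)`-tuples of indices whose members have nonempty common intersection. -/
def CechSimplex {X : Type*} (N : ℕ) (U : Fin N → Set X) (q : ℕ) : Type :=
  {s : Fin (q + 1) → Fin N // StrictMono s ∧ (⋂ i, U (s i)).Nonempty}

instance {X : Type*} (N : ℕ) (U : Fin N → Set X) (q : ℕ) :
    Fintype (CechSimplex N U q) := by
  unfold CechSimplex; infer_instance

/-- Real Čech `q`-cochains: functions on `(q+1)`-tuples of indices (the values on
non-simplices are irrelevant; norms are always taken over simplices). -/
def CechCochain {X : Type*} (N : ℕ) (_U : Fin N → Set X) (q : ℕ) : Type :=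
  (Fin (q + 1) → Fin N) → ℝ

/-- The Čech coboundary `δc(i₀,…,i_{q+1}) = ∑ⱼ (-1)ʲ c(i₀,…,îⱼ,…,i_{q+1})`. -/
def cechDelta {X : Type*} (N : ℕ) (U : Fin N → Set X) (q : ℕ)
    (c : CechCochain N U q) : CechCochain N U (q + 1) :=
  fun t => ∑ j : Fin (q + 2), (-1 : ℝ) ^ (j : ℕ) * c (t ∘ j.succAbove)

/-- If `𝒰 = {U₁,…,U_N}` is a finite open cover of a topological space and
`ν > 0` satisfies `|{j : U_j ∩ U_I ≠ ∅}| ≤ ν` for every simplex `I` of the nerve, then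
`‖δb‖² ≤ (p+2)·ν·‖b‖²` for every `p`-cochain `b`, where the norm comes from the ℓ²
inner product `(c₁, c₂) = ∑_{I ∈ S_p(𝒰)} c₁(I)·c₂(I)` on Čech cochains. -/
theorem stmt_5 {X : Type*} [TopologicalSpace X] (N : ℕ) (U : Fin N → Set X)
    (hopen : ∀ i, IsOpen (U i)) (hcover : (⋃ i, U i) = Set.univ)
    (p : ℕ) (ν : ℕ) (hν : 0 < ν)
    (hmult : ∀ (q : ℕ) (s : Fin (q + 1) → Fin N), StrictMono s →
      (⋂ i, U (s i)).Nonempty →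
      (Finset.univ.filter fun j : Fin N => (U j ∩ ⋂ i, U (s i)).Nonempty).card ≤ ν)
    (b : CechCochain N U p) :
    ∑ t : CechSimplex N U (p + 1), (cechDelta N U p b t.1) ^ 2 ≤
      ((p : ℝ) + 2) * ν * ∑ s : CechSimplex N U p, (b s.1) ^ 2 := by
  classical
  -- helper: two strict monos Fin n → Fin N with equal range are equal
  have unique_mono : ∀ {n : ℕ} (f g : Fin n → Fin N), StrictMono f → StrictMono g →
      Set.range f = Set.range g → f = g := by
    intro n f g hf hg hr
    have hcard : (Finset.univ.image g).card = n := by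
      rw [Finset.card_image_of_injective _ hg.injective, Finset.card_univ, Fintype.card_fin]
    have hfs : ∀ x, f x ∈ Finset.univ.image g := by
      intro x
      have : f x ∈ Set.range g := hr ▸ Set.mem_range_self x
      obtain ⟨y, hy⟩ := this
      exact Finset.mem_image.2 ⟨y, Finset.mem_univ _, hy⟩
    have hgs : ∀ x, g x ∈ Finset.univ.image g := fun x =>
      Finset.mem_image.2 ⟨x, Finset.mem_univ _, rfl⟩
    exact (Finset.orderEmbOfFin_unique hcard hfs hf).trans
      (Finset.orderEmbOfFin_unique hcard hgs hg).symm
  -- faces of simplices are simplices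
  have key : ∀ (t : CechSimplex N U (p + 1)) (j : Fin (p + 2)),
      StrictMono (t.1 ∘ j.succAbove) ∧ (⋂ i, U ((t.1 ∘ j.succAbove) i)).Nonempty := by
    intro t j
    refine ⟨t.2.1.comp (Fin.strictMono_succAbove j), t.2.2.mono ?_⟩
    exact Set.iInter_mono' fun i => ⟨j.succAbove i, subset_rfl⟩
  set F : CechSimplex N U (p + 1) × Fin (p + 2) → CechSimplex N U p :=
    fun x => ⟨x.1.1 ∘ x.2.succAbove, (key x.1 x.2).1, (key x.1 x.2).2⟩ with hF
  have step1 : ∑ t : CechSimplex N U (p + 1), (cechDelta N U p b t.1) ^ 2 ≤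
      ((p : ℝ) + 2) * ∑ x : CechSimplex N U (p + 1) × Fin (p + 2), (b (F x).1) ^ 2 := by
    rw [Finset.mul_sum, Fintype.sum_prod_type]
    refine Finset.sum_le_sum fun t _ => ?_
    have h := sq_sum_le_card_mul_sum_sq (s := (Finset.univ : Finset (Fin (p + 2))))
      (f := fun j => (-1 : ℝ) ^ (j : ℕ) * b (t.1 ∘ j.succAbove))
    have hcard : ((Finset.univ : Finset (Fin (p + 2))).card : ℝ) = (p : ℝ) + 2 := by
      simp [Finset.card_univ]
    calc (cechDelta N U p b t.1) ^ 2
        = (∑ j : Fin (p + 2), (-1 : ℝ) ^ (j : ℕ) * b (t.1 ∘ j.succAbove)) ^ 2 := rfl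
      _ ≤ ((Finset.univ : Finset (Fin (p + 2))).card : ℝ) *
            ∑ j : Fin (p + 2), ((-1 : ℝ) ^ (j : ℕ) * b (t.1 ∘ j.succAbove)) ^ 2 := h
      _ = ((p : ℝ) + 2) * ∑ j : Fin (p + 2), (b (F (t, j)).1) ^ 2 := by
          rw [hcard]
          congr 1
          refine Finset.sum_congr rfl fun j _ => ?_
          rw [mul_pow, ← pow_mul, mul_comm (j : ℕ) 2, pow_mul, neg_one_sq, one_pow, one_mul]
      _ = ∑ j : Fin (p + 2), ((p : ℝ) + 2) * (b (F (t, j)).1) ^ 2 := Finset.mul_sum _ _ _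
  have step2 : ∑ x : CechSimplex N U (p + 1) × Fin (p + 2), (b (F x).1) ^ 2 ≤
      (ν : ℝ) * ∑ s : CechSimplex N U p, (b s.1) ^ 2 := by
    rw [Finset.sum_comp (fun s : CechSimplex N U p => (b s.1) ^ 2) F]
    have hfiber : ∀ s : CechSimplex N U p,
        (Finset.univ.filter fun x : CechSimplex N U (p + 1) × Fin (p + 2) => F x = s).card ≤ ν := by
      intro s
      refine le_trans (Finset.card_le_card_of_injOn (fun x => x.1.1 x.2) ?_ ?_)
        (hmult p s.1 s.2.1 s.2.2)
      · intro x hx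
        rw [Finset.mem_coe, Finset.mem_filter] at hx
        rw [Finset.mem_coe]
        refine Finset.mem_filter.2 ⟨Finset.mem_univ _, ?_⟩
        refine x.1.2.2.mono ?_
        intro a ha
        simp only [Set.mem_iInter] at ha
        refine ⟨ha x.2, ?_⟩
        simp only [Set.mem_iInter]
        intro i
        have : s.1 i = x.1.1 (x.2.succAbove i) := by rw [← hx.2]; rfl
        rw [this]; exact ha _
      · intro x hx y hy hxy
        rw [Finset.mem_coe, Finset.mem_filter] at hx hy
        have hxy' : x.1.1 x.2 = y.1.1 y.2 := hxy
        have hrange : Set.range x.1.1 = Set.range y.1.1 := by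
          have hx2 : Set.range x.1.1 = Set.range (x.1.1 ∘ x.2.succAbove) ∪ {x.1.1 x.2} := by
            ext v
            constructor
            · rintro ⟨i, rfl⟩
              rcases eq_or_ne i x.2 with h | h
              · exact Or.inr (by simp [h])
              · obtain ⟨k, hk⟩ := Fin.exists_succAbove_eq h
                exact Or.inl ⟨k, by simp [hk]⟩
            · rintro (⟨k, rfl⟩ | h)
              · exact ⟨x.2.succAbove k, rfl⟩
              · exact ⟨x.2, h.symm⟩
          have hy2 : Set.range y.1.1 = Set.range (y.1.1 ∘ y.2.succAbove) ∪ {y.1.1 y.2} := by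
            ext v
            constructor
            · rintro ⟨i, rfl⟩
              rcases eq_or_ne i y.2 with h | h
              · exact Or.inr (by simp [h])
              · obtain ⟨k, hk⟩ := Fin.exists_succAbove_eq h
                exact Or.inl ⟨k, by simp [hk]⟩
            · rintro (⟨k, rfl⟩ | h)
              · exact ⟨y.2.succAbove k, rfl⟩
              · exact ⟨y.2, h.symm⟩
          have hxs : (x.1.1 ∘ x.2.succAbove) = s.1 := congrArg Subtype.val hx.2
          have hys : (y.1.1 ∘ y.2.succAbove) = s.1 := congrArg Subtype.val hy.2
          rw [hx2, hy2, hxs, hys, hxy']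
        have hteq : x.1.1 = y.1.1 := unique_mono _ _ x.1.2.1 y.1.2.1 hrange
        have hjeq : x.2 = y.2 :=
          x.1.2.1.injective (hxy'.trans (congrFun hteq y.2).symm)
        exact Prod.ext (Subtype.ext hteq) hjeq
    have hnn : ∀ s : CechSimplex N U p, (0 : ℝ) ≤ (b s.1) ^ 2 := fun s => sq_nonneg _
    calc ∑ s ∈ Finset.univ.image F,
          (Finset.univ.filter fun x => F x = s).card • (b s.1) ^ 2
        ≤ ∑ s ∈ Finset.univ.image F, (ν : ℝ) * (b s.1) ^ 2 := by
          refine Finset.sum_le_sum fun s _ => ?_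
          rw [nsmul_eq_mul]
          exact mul_le_mul_of_nonneg_right (by exact_mod_cast hfiber s) (hnn s)
      _ ≤ ∑ s : CechSimplex N U p, (ν : ℝ) * (b s.1) ^ 2 := by
          refine Finset.sum_le_sum_of_subset_of_nonneg (Finset.subset_univ _) ?_
          intro s _ _
          positivity
      _ = (ν : ℝ) * ∑ s : CechSimplex N U p, (b s.1) ^ 2 := by rw [Finset.mul_sum]
  calc ∑ t : CechSimplex N U (p + 1), (cechDelta N U p b t.1) ^ 2
      ≤ ((p : ℝ) + 2) * ∑ x : CechSimplex N U (p + 1) × Fin (p + 2), (b (F x).1) ^ 2 := step1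
    _ ≤ ((p : ℝ) + 2) * ((ν : ℝ) * ∑ s : CechSimplex N U p, (b s.1) ^ 2) :=
        mul_le_mul_of_nonneg_left step2 (by positivity)
    _ = ((p : ℝ) + 2) * ν * ∑ s : CechSimplex N U p, (b s.1) ^ 2 := by ring

end
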